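/- Let g ≥ 6. For a general choice of a_{i,k} (k=1,2, i=1,...,g-1), the linear system of 2g-2 equations Q_{0,1}(s) = ... = Q_{g-1,1}(s) = Q_{1,2}(s) = ... = Q_{g-2,2}(s) = 0 in the (g-1)(g-2)/2 unknowns s_{ij} (1 ≤ i < j ≤ g-1) has maximal rank 2g-2; consequently the space of quadrics containing the Prym-canonical binary curve C = C_1 ∪ C_2 in P^{g-2} has dimension (g-1)(g-2)/2 − (2g-2) = (g²-7g+10)/2, i.e. C is quadratically normal. -/

import Mathlib

open Finset
open Matrix


/-- Sum lemma for type-A columns. -/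
private lemma sumA {K : ℕ} (w : Fin K → ℂ) (F : ℕ → ℂ) (e : Fin K → ℕ) (x y : ℂ)
    (hF : ∀ r, F r * (x - y) = x ^ (r + 1) - y ^ (r + 1)) :
    (∑ n : Fin K, F (e n) * w n) * (x - y) =
      x * (∑ n : Fin K, w n * x ^ e n) - y * (∑ n : Fin K, w n * y ^ e n) := by
  rw [Finset.sum_mul, Finset.mul_sum, Finset.mul_sum, ← Finset.sum_sub_distrib]
  refine Finset.sum_congr rfl fun n _ => ?_
  have h := hF (e n)
  rw [pow_succ, pow_succ] at h
  linear_combination w n * h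

/-- Sum lemma for type-B columns. -/
private lemma sumB {K : ℕ} (w : Fin K → ℂ) (F : ℕ → ℂ) (e : Fin K → ℕ) (x y cc : ℂ)
    (hF : ∀ r, F r * (x - y) = cc * (x ^ r - y ^ r)) :
    (∑ n : Fin K, F (e n) * w n) * (x - y) =
      cc * ((∑ n : Fin K, w n * x ^ e n) - (∑ n : Fin K, w n * y ^ e n)) := by
  rw [Finset.sum_mul, ← Finset.sum_sub_distrib, Finset.mul_sum]
  refine Finset.sum_congr rfl fun n _ => ?_
  linear_combination w n * hF (e n)

/-- Sum lemma for type-C columns, second (shifted) block. -/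
private lemma sumCshift {K : ℕ} (w : Fin K → ℂ) (F : ℕ → ℂ) (x y : ℂ)
    (hF : ∀ r, F r * (x - y) = x * y * (x ^ (r - 1) - y ^ (r - 1))) :
    (∑ n : Fin K, F (K - (n : ℕ)) * w n) * (x - y) =
      y * (∑ n : Fin K, w n * x ^ (K - (n : ℕ))) - x * (∑ n : Fin K, w n * y ^ (K - (n : ℕ))) := by
  rw [Finset.sum_mul, Finset.mul_sum, Finset.mul_sum, ← Finset.sum_sub_distrib]
  refine Finset.sum_congr rfl fun n _ => ?_
  have hpx : x ^ (K - (n : ℕ)) = x ^ (K - (n : ℕ) - 1) * x := by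
    rw [← pow_succ]; congr 1; omega
  have hpy : y ^ (K - (n : ℕ)) = y ^ (K - (n : ℕ) - 1) * y := by
    rw [← pow_succ]; congr 1; omega
  rw [hpx, hpy]
  linear_combination w n * hF (K - (n : ℕ))

/-- Sum lemma for type-C columns, first (full) block. -/
private lemma sumCfull {K : ℕ} (hK : 1 ≤ K) (w : Fin K → ℂ) (F : ℕ → ℂ) (x y : ℂ)
    (hF : ∀ r, F r * (x - y) = x * y * (x ^ (r - 1) - y ^ (r - 1))) :
    (∑ n : Fin K, F (K - 1 - (n : ℕ)) * w n) * (x - y) =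
      y * ((∑ n : Fin K, w n * x ^ (K - 1 - (n : ℕ))) - w ⟨K - 1, by omega⟩)
      - x * ((∑ n : Fin K, w n * y ^ (K - 1 - (n : ℕ))) - w ⟨K - 1, by omega⟩) := by
  set a : Fin K := ⟨K - 1, by omega⟩ with ha
  have hmem : a ∈ (Finset.univ : Finset (Fin K)) := Finset.mem_univ a
  rw [← Finset.sum_erase_add _ _ hmem, ← Finset.sum_erase_add _ _ hmem,
    ← Finset.sum_erase_add _ _ hmem]
  have hzero : F (K - 1 - (a : ℕ)) * (x - y) = 0 := by
    have h := hF (K - 1 - (a : ℕ))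
    have : K - 1 - (a : ℕ) = 0 := by simp [ha]
    rw [this] at h
    rw [this]; simpa using h
  have hx0 : x ^ (K - 1 - (a : ℕ)) = 1 := by
    have : K - 1 - (a : ℕ) = 0 := by simp [ha]
    rw [this, pow_zero]
  have hy0 : y ^ (K - 1 - (a : ℕ)) = 1 := by
    have : K - 1 - (a : ℕ) = 0 := by simp [ha]
    rw [this, pow_zero]
  rw [add_mul]
  have hstep : (∑ n ∈ Finset.univ.erase a, F (K - 1 - (n : ℕ)) * w n) * (x - y) =
      y * (∑ n ∈ Finset.univ.erase a, w n * x ^ (K - 1 - (n : ℕ)))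
      - x * (∑ n ∈ Finset.univ.erase a, w n * y ^ (K - 1 - (n : ℕ))) := by
    rw [Finset.sum_mul, Finset.mul_sum, Finset.mul_sum, ← Finset.sum_sub_distrib]
    refine Finset.sum_congr rfl fun n hn => ?_
    have hne : (n : ℕ) ≠ K - 1 := by
      intro h
      exact (Finset.mem_erase.mp hn).1 (by apply Fin.ext; simpa [ha] using h)
    have hlt : (n : ℕ) < K := n.isLt
    have hpx : x ^ (K - 1 - (n : ℕ)) = x ^ (K - 1 - (n : ℕ) - 1) * x := by
      rw [← pow_succ]; congr 1; omega
    have hpy : y ^ (K - 1 - (n : ℕ)) = y ^ (K - 1 - (n : ℕ) - 1) * y := by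
      rw [← pow_succ]; congr 1; omega
    rw [hpx, hpy]
    linear_combination w n * hF (K - 1 - (n : ℕ))
  rw [hstep, hx0, hy0]
  linear_combination w a * hzero

private lemma middle (g m : ℕ) (hm3 : 3 ≤ m) (hmg : m + 2 ≤ g - 1)
    (φ ψ : ℕ → ℂ) (lam0 : ℂ)
    (hFA : ∀ I J : ℕ, 1 ≤ I → I < J → J ≤ m → (I : ℂ) * (φ I + ψ J) = (J : ℂ) * (φ J + ψ I))
    (hFB : ∀ I J : ℕ, 1 ≤ I → I ≤ m → m < J → J ≤ g - 1 →
      (J : ℂ) * (φ I - φ J) + (I : ℂ) * (ψ I - ψ J) = 0)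
    (hFC : ∀ I J : ℕ, m < I → I < J → J ≤ g - 1 →
      (J : ℂ) * φ I - (I : ℂ) * φ J + lam0 * ((I : ℂ) - (J : ℂ)) - (I : ℂ) * ψ I
        + (J : ℂ) * ψ J = 0) :
    ∃ ρ : ℂ, (∀ i, 1 ≤ i → i ≤ g - 1 → φ i = ρ) ∧ (∀ i, 1 ≤ i → i ≤ g - 1 → ψ i = -ρ)
      ∧ lam0 = 0 := by
  obtain ⟨K, hK⟩ : ∃ K : ℂ, K = ψ (m + 2) - ψ (m + 1) := ⟨_, rfl⟩
  obtain ⟨ρ, hρ⟩ : ∃ ρ : ℂ, ρ = φ 1 - K := ⟨_, rfl⟩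
  obtain ⟨σ, hσ⟩ : ∃ σ : ℂ, σ = ψ (m + 1) - ((m : ℂ) + 1) * K := ⟨_, rfl⟩
  obtain ⟨τ, hτ⟩ : ∃ τ : ℂ, τ = ((m : ℂ) + 1) * (φ (m + 1) - ρ) := ⟨_, rfl⟩
  -- Step 1 : φ is affine on S
  have hφlin : ∀ i i' : ℕ, 1 ≤ i → i ≤ m → 1 ≤ i' → i' ≤ m →
      φ i - φ i' = ((i : ℂ) - (i' : ℂ)) * K := by
    intro i i' h1 h2 h3 h4
    have b1 := hFB i (m + 1) h1 h2 (by omega) (by omega)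
    have b2 := hFB i (m + 2) h1 h2 (by omega) (by omega)
    have b3 := hFB i' (m + 1) h3 h4 (by omega) (by omega)
    have b4 := hFB i' (m + 2) h3 h4 (by omega) (by omega)
    push_cast at b1 b2 b3 b4
    linear_combination (-1 : ℂ) * b1 + b2 + b3 - b4 - ((i : ℂ) - (i' : ℂ)) * hK
  -- φ values on S
  have hφS : ∀ i : ℕ, 1 ≤ i → i ≤ m → φ i = (i : ℂ) * K + ρ := by
    intro i h1 h2
    have h := hφlin i 1 h1 h2 le_rfl (by omega)
    push_cast at h
    linear_combination h - hρ
  -- Step 2 : ψ is affine on L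
  have hψlin : ∀ j j' : ℕ, m < j → j ≤ g - 1 → m < j' → j' ≤ g - 1 →
      ψ j - ψ j' = ((j : ℂ) - (j' : ℂ)) * K := by
    intro j j' h1 h2 h3 h4
    have b1 := hFB 1 j (by omega) (by omega) h1 h2
    have b2 := hFB 2 j (by omega) (by omega) h1 h2
    have b3 := hFB 1 j' (by omega) (by omega) h3 h4
    have b4 := hFB 2 j' (by omega) (by omega) h3 h4
    have h21 : φ 2 - φ 1 = K := by
      have h := hφlin 2 1 (by omega) (by omega) le_rfl (by omega)
      push_cast at h
      linear_combination h
    push_cast at b1 b2 b3 b4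
    linear_combination b1 - b2 - b3 + b4 + ((j : ℂ) - (j' : ℂ)) * h21
  have hψLv : ∀ j : ℕ, m < j → j ≤ g - 1 → ψ j = (j : ℂ) * K + σ := by
    intro j h1 h2
    have h := hψlin j (m + 1) h1 h2 (by omega) (by omega)
    push_cast at h
    linear_combination h - hσ
  -- Step 3 : the cross relation
  have hτφ : ∀ j : ℕ, m < j → j ≤ g - 1 → (j : ℂ) * (φ j - ρ) = τ := by
    intro j h1 h2
    have b1 := hFB 1 j (by omega) (by omega) h1 h2
    have b2 := hFB 1 (m + 1) (by omega) (by omega) (by omega) (by omega)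
    have h3 := hψLv j h1 h2
    have h4 := hψLv (m + 1) (by omega) (by omega)
    push_cast at b1 b2 h3 h4
    linear_combination (-1 : ℂ) * b1 + b2 - h3 + h4 - hτ + (((m : ℂ) + 1) - (j : ℂ)) * hρ
  have hτψ : ∀ i : ℕ, 1 ≤ i → i ≤ m → (i : ℂ) * (ψ i - σ) = τ := by
    intro i h1 h2
    have b := hFB i (m + 1) h1 h2 (by omega) (by omega)
    have hs := hφS i h1 h2
    push_cast at b hs
    linear_combination b - ((m : ℂ) + 1) * hs - hτ - (i : ℂ) * hσ
  -- value lemmas at 1 2 3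
  have hφ1 : φ 1 = K + ρ := by
    have := hφS 1 le_rfl (by omega); push_cast at this; linear_combination this
  have hφ2 : φ 2 = 2 * K + ρ := by
    have := hφS 2 (by omega) (by omega); push_cast at this; linear_combination this
  have hφ3 : φ 3 = 3 * K + ρ := by
    have := hφS 3 (by omega) (by omega); push_cast at this; linear_combination this
  have hψ1 : ψ 1 = σ + τ := by
    have := hτψ 1 le_rfl (by omega); push_cast at this; linear_combination this
  have hψ2 : ψ 2 = σ + τ / 2 := by
    have := hτψ 2 (by omega) (by omega); push_cast at this
    linear_combination this / 2
  have hψ3 : ψ 3 = σ + τ / 3 := by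
    have := hτψ 3 (by omega) (by omega); push_cast at this
    linear_combination this / 3
  -- the three A equations
  have a12 := hFA 1 2 le_rfl (by omega) (by omega)
  have a13 := hFA 1 3 le_rfl (by omega) (by omega)
  have a23 := hFA 2 3 (by omega) (by omega) (by omega)
  push_cast at a12 a13 a23
  have e1 : 6 * K + 2 * (ρ + σ) + 3 * τ = 0 := by
    linear_combination (-2 : ℂ) * a12 + 2 * hφ1 - 4 * hφ2 - 4 * hψ1 + 2 * hψ2
  have e2 : 12 * K + 3 * (ρ + σ) + 4 * τ = 0 := by
    linear_combination (-3/2 : ℂ) * a13 + (3/2 : ℂ) * hφ1 + (3/2 : ℂ) * hψ3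
      - (9/2 : ℂ) * hφ3 - (9/2 : ℂ) * hψ1
  have e3 : 30 * K + 6 * (ρ + σ) + 5 * τ = 0 := by
    linear_combination (-6 : ℂ) * a23 + 12 * hφ2 + 12 * hψ3 - 18 * hφ3 - 18 * hψ2
  have hτ0 : τ = 0 := by
    linear_combination (-3/2 : ℂ) * e1 + 2 * e2 - (1/2 : ℂ) * e3
  have hK0 : K = 0 := by
    linear_combination (-3/4 : ℂ) * e1 + (2/3 : ℂ) * e2 - (1/12 : ℂ) * e3
  have hρσ : ρ + σ = 0 := by
    linear_combination (5 : ℂ) * e1 - 5 * e2 + e3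
  -- pointwise values everywhere
  have hφL : ∀ j : ℕ, m < j → j ≤ g - 1 → φ j = ρ := by
    intro j h1 h2
    have h := hτφ j h1 h2
    rw [hτ0] at h
    have hj : ((j : ℕ) : ℂ) ≠ 0 := Nat.cast_ne_zero.mpr (by omega)
    rcases mul_eq_zero.mp h with h' | h'
    · exact absurd h' hj
    · linear_combination h' 
  have hψS : ∀ i : ℕ, 1 ≤ i → i ≤ m → ψ i = σ := by
    intro i h1 h2
    have h := hτψ i h1 h2
    rw [hτ0] at h
    have hi : ((i : ℕ) : ℂ) ≠ 0 := Nat.cast_ne_zero.mpr (by omega)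
    rcases mul_eq_zero.mp h with h' | h'
    · exact absurd h' hi
    · linear_combination h' 
  have hlam : lam0 = 0 := by
    have hc := hFC (m + 1) (m + 2) (by omega) (by omega) (by omega)
    have hφm1 := hφL (m + 1) (by omega) (by omega)
    have hφm2 := hφL (m + 2) (by omega) (by omega)
    have hψm1 : ψ (m + 1) = σ := by
      have := hψLv (m + 1) (by omega) (by omega); rw [hK0] at this
      linear_combination this
    have hψm2 : ψ (m + 2) = σ := by
      have := hψLv (m + 2) (by omega) (by omega); rw [hK0] at this
      linear_combination this
    push_cast at hc
    linear_combination (-1 : ℂ) * hc + ((m : ℂ) + 2) * hφm1 - ((m : ℂ) + 1) * hφm2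
      - ((m : ℂ) + 1) * hψm1 + ((m : ℂ) + 2) * hψm2 + hρσ
  refine ⟨ρ, ?_, ?_, hlam⟩
  · intro i h1 h2
    rcases le_or_gt i m with h | h
    · rw [hφS i h1 h, hK0]; ring
    · exact hφL i h h2
  · intro i h1 h2
    rcases le_or_gt i m with h | h
    · have := hψS i h1 h
      linear_combination this + hρσ
    · have := hψLv i h h2
      rw [hK0] at this
      linear_combination this + hρσ

private lemma cardPairs (N : ℕ) :
    Fintype.card {p : Fin N × Fin N // p.1 < p.2} = N * (N - 1) / 2 := by
  have e : {p : Fin N × Fin N // p.1 < p.2} ≃ Σ j : Fin N, Fin (j : ℕ) :=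
    { toFun := fun p => ⟨p.1.2, ⟨(p.1.1 : ℕ), p.2⟩⟩
      invFun := fun x => ⟨(⟨(x.2 : ℕ), lt_trans x.2.isLt x.1.isLt⟩, x.1), x.2.isLt⟩
      left_inv := by rintro ⟨⟨a, b⟩, h⟩; rfl
      right_inv := by rintro ⟨j, i⟩; rfl }
  rw [Fintype.card_congr e, Fintype.card_sigma]
  simp only [Fintype.card_fin]
  rw [Fin.sum_univ_eq_sum_range (fun i => i) N]
  exact Finset.sum_range_id N

private lemma endgame (g : ℕ) (hg : 6 ≤ g) (w : Fin g → ℂ) (u : Fin (g - 2) → ℂ) (ρ : ℂ)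
    (hφ : ∀ i : ℕ, 1 ≤ i → i ≤ g - 1 →
      (∑ n : Fin g, w n * ((i : ℕ) : ℂ) ^ (g - 1 - (n : ℕ))) = ρ)
    (hψ : ∀ i : ℕ, 1 ≤ i → i ≤ g - 1 →
      (∑ n : Fin (g - 2), u n * (((i : ℕ) : ℂ))⁻¹ ^ (g - 2 - (n : ℕ))) = -ρ)
    (hlam : w ⟨g - 1, by omega⟩ = 0) :
    (∀ n, w n = 0) ∧ (∀ n, u n = 0) := by
  set P : Polynomial ℂ := ∑ n : Fin g, Polynomial.C (w n) * Polynomial.X ^ (g - 1 - (n : ℕ))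
    with hP
  set Q : Polynomial ℂ := ∑ n : Fin (g - 2),
    Polynomial.C (u n) * Polynomial.X ^ (g - 2 - (n : ℕ)) with hQ
  have hPeval : ∀ z : ℂ, P.eval z = ∑ n : Fin g, w n * z ^ (g - 1 - (n : ℕ)) := by
    intro z; rw [hP, Polynomial.eval_finset_sum]; simp
  have hQeval : ∀ z : ℂ, Q.eval z = ∑ n : Fin (g - 2), u n * z ^ (g - 2 - (n : ℕ)) := by
    intro z; rw [hQ, Polynomial.eval_finset_sum]; simp
  have hPdeg : P.natDegree ≤ g - 1 := by
    refine Polynomial.natDegree_sum_le_of_forall_le _ _ fun n _ => ?_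
    refine le_trans (Polynomial.natDegree_C_mul_le _ _) ?_
    rw [Polynomial.natDegree_X_pow]; omega
  have hQdeg : Q.natDegree ≤ g - 2 := by
    refine Polynomial.natDegree_sum_le_of_forall_le _ _ fun n _ => ?_
    refine le_trans (Polynomial.natDegree_C_mul_le _ _) ?_
    rw [Polynomial.natDegree_X_pow]; omega
  -- the finsets of evaluation points
  have hinjx : Set.InjOn (fun i : ℕ => ((i : ℕ) : ℂ)) ↑(Finset.Icc 1 (g - 1)) := by
    intro i _ j _ h
    have h' : ((i : ℕ) : ℂ) = ((j : ℕ) : ℂ) := h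
    exact_mod_cast h' 
  have hinjy : Set.InjOn (fun i : ℕ => (((i : ℕ) : ℂ))⁻¹) ↑(Finset.Icc 1 (g - 1)) := by
    intro i hi j hj h
    simp only [Finset.coe_Icc, Set.mem_Icc] at hi hj
    have h' : (((i : ℕ) : ℂ))⁻¹ = (((j : ℕ) : ℂ))⁻¹ := h
    have h'' := inv_injective h'
    exact_mod_cast h'' 
  have hcardIcc : (Finset.Icc 1 (g - 1)).card = g - 1 := by
    rw [Nat.card_Icc]; omega
  -- Step 1 : Q + C ρ vanishes at the g-1 points (i : ℂ)⁻¹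
  have hQ0 : Q + Polynomial.C ρ = 0 := by
    apply Polynomial.eq_zero_of_natDegree_lt_card_of_eval_eq_zero' _
      ((Finset.Icc 1 (g - 1)).image fun i : ℕ => (((i : ℕ) : ℂ))⁻¹)
    · intro z hz
      simp only [Finset.mem_image, Finset.mem_Icc] at hz
      obtain ⟨i, ⟨hi1, hi2⟩, rfl⟩ := hz
      rw [Polynomial.eval_add, Polynomial.eval_C, hQeval, hψ i hi1 hi2]
      ring
    · rw [Finset.card_image_of_injOn hinjy, hcardIcc]
      have h1 := Polynomial.natDegree_add_le Q (Polynomial.C ρ)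
      have h2 : (Polynomial.C ρ).natDegree = 0 := Polynomial.natDegree_C ρ
      omega
  -- evaluate at 0 : exponents in Q are all ≥ 1
  have hQzero : Q.eval 0 = 0 := by
    rw [hQeval]
    apply Finset.sum_eq_zero
    intro n _
    have : g - 2 - (n : ℕ) ≠ 0 := by have := n.isLt; omega
    rw [zero_pow this, mul_zero]
  have hρ0 : ρ = 0 := by
    have := congrArg (Polynomial.eval 0) hQ0
    simpa [hQzero] using this
  have hQzero' : Q = 0 := by
    have := hQ0
    rw [hρ0] at this
    simpa using this
  -- Step 2 : P vanishes at 0 and at the g-1 points (i : ℂ)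
  have hPzero : P = 0 := by
    apply Polynomial.eq_zero_of_natDegree_lt_card_of_eval_eq_zero' _
      (insert (0 : ℂ) ((Finset.Icc 1 (g - 1)).image fun i : ℕ => ((i : ℕ) : ℂ)))
    · intro z hz
      rcases Finset.mem_insert.mp hz with rfl | hz
      · rw [hPeval]
        rw [Finset.sum_eq_single (⟨g - 1, by omega⟩ : Fin g)]
        · simp only [Nat.sub_self, pow_zero, mul_one]
          exact hlam
        · intro b _ hb
          have hbv : (b : ℕ) ≠ g - 1 := by
            intro h; exact hb (Fin.ext (by simpa using h))
          have : g - 1 - (b : ℕ) ≠ 0 := by have := b.isLt; omega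
          rw [zero_pow this, mul_zero]
        · intro h; exact absurd (Finset.mem_univ _) h
      · simp only [Finset.mem_image, Finset.mem_Icc] at hz
        obtain ⟨i, ⟨hi1, hi2⟩, rfl⟩ := hz
        rw [hPeval, hφ i hi1 hi2, hρ0]
    · have hnotmem : (0 : ℂ) ∉ (Finset.Icc 1 (g - 1)).image fun i : ℕ => ((i : ℕ) : ℂ) := by
        simp only [Finset.mem_image, Finset.mem_Icc, not_exists]
        rintro i ⟨⟨hi1, hi2⟩, h⟩
        have : (i : ℕ) = 0 := by exact_mod_cast h
        omega
      rw [Finset.card_insert_of_notMem hnotmem, Finset.card_image_of_injOn hinjx, hcardIcc]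
      omega
  -- extract coefficients
  constructor
  · intro n
    have hc : P.coeff (g - 1 - (n : ℕ)) = w n := by
      rw [hP, Polynomial.finset_sum_coeff]
      rw [Finset.sum_eq_single n]
      · simp
      · intro b _ hb
        have hbn : (b : ℕ) ≠ (n : ℕ) := fun h => hb (Fin.ext h)
        have hne : g - 1 - (n : ℕ) ≠ g - 1 - (b : ℕ) := by
          have := b.isLt; have := n.isLt; omega
        simp [Polynomial.coeff_X_pow, hne]
      · intro h; exact absurd (Finset.mem_univ _) h
    rw [← hc, hPzero, Polynomial.coeff_zero]
  · intro n
    have hc : Q.coeff (g - 2 - (n : ℕ)) = u n := by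
      rw [hQ, Polynomial.finset_sum_coeff]
      rw [Finset.sum_eq_single n]
      · simp
      · intro b _ hb
        have hbn : (b : ℕ) ≠ (n : ℕ) := fun h => hb (Fin.ext h)
        have hne : g - 2 - (n : ℕ) ≠ g - 2 - (b : ℕ) := by
          have := b.isLt; have := n.isLt; omega
        simp [Polynomial.coeff_X_pow, hne]
      · intro h; exact absurd (Finset.mem_univ _) h
    rw [← hc, hQzero', Polynomial.coeff_zero]


/-- The function `φ` built from a row-dependency vector. -/
private noncomputable def phiF (g : ℕ) (v : Fin g ⊕ Fin (g - 2) → ℂ) (i : ℕ) : ℂ :=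
  ∑ n : Fin g, v (Sum.inl n) * ((i : ℕ) : ℂ) ^ (g - 1 - (n : ℕ))

/-- The function `ψ` built from a row-dependency vector. -/
private noncomputable def psiF (g : ℕ) (v : Fin g ⊕ Fin (g - 2) → ℂ) (i : ℕ) : ℂ :=
  ∑ n : Fin (g - 2), v (Sum.inr n) * (((i : ℕ) : ℂ))⁻¹ ^ (g - 2 - (n : ℕ))





/-- Proposition 4.3: for `g ≥ 6` and a general choice of parameters (it suffices to exhibit one
choice), the linear system `Q_{0,1} = ... = Q_{g-1,1} = Q_{1,2} = ... = Q_{g-2,2} = 0` in the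
`(g-1)(g-2)/2` unknowns `s_{ij}` (`1 ≤ i < j ≤ g-1`) has maximal rank `2g-2`; consequently the
space of quadrics containing the Prym-canonical binary curve `C = C₁ ∪ C₂ ⊂ P^{g-2}` has
dimension `(g-1)(g-2)/2 - (2g-2)`, i.e. `C` is quadratically normal.  Here
`Q_{n,k}(s) = ∑_{i<j} q̃_{g-1-n,k;i,j} s_{ij}` with the `q̃` built from the Prym-canonical data:
`δ_{i,k} = 1` for `i ≤ ⌊g/2⌋` and `0` otherwise, `c_{i,k} = 0` for `i ≤ ⌊g/2⌋` and
`c_{i,1} = -d·a_{i,1}`, `c_{i,2} = d·a_{i,2}` otherwise. -/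
theorem stmt6 (g : ℕ) (hg : 6 ≤ g) :
    ∃ (a : Fin 2 → ℕ → ℂ) (d : ℂ), d ≠ 0 ∧
      (∀ k, ∀ i ∈ Finset.Icc 1 (g - 1), a k i ≠ 0) ∧
      (∀ k, Set.InjOn (a k) (Finset.Icc 1 (g - 1))) ∧
      ∀ (δ : ℕ → ℂ) (c : Fin 2 → ℕ → ℂ),
        (∀ i, δ i = if i ≤ g / 2 then 1 else 0) →
        (∀ i, c 0 i = if i ≤ g / 2 then 0 else -d * a 0 i) →
        (∀ i, c 1 i = if i ≤ g / 2 then 0 else d * a 1 i) →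
        ∀ (q : Fin 2 → ℕ → ℕ → ℕ → ℂ),
          (∀ k h i j, q k h i j = ∑ m ∈ Finset.range (h + 1), a k i ^ m * a k j ^ (h - m)) →
          ∀ (qt : Fin 2 → ℕ → ℕ → ℕ → ℂ),
            (∀ k i j, qt k 0 i j = δ i * δ j) →
            (∀ k i j, qt k 1 i j = q k 1 i j * (δ i * δ j) - (δ i * c k j + c k i * δ j)) →
            (∀ k r i j, 2 ≤ r →
              qt k r i j = q k r i j * (δ i * δ j) - q k (r - 1) i j * (δ i * c k j + c k i * δ j)
                + q k (r - 2) i j * (c k i * c k j)) →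
            ∀ (M : Matrix (Fin g ⊕ Fin (g - 2))
                {p : Fin (g - 1) × Fin (g - 1) // p.1 < p.2} ℂ),
              (∀ (n : Fin g) (p : {p : Fin (g - 1) × Fin (g - 1) // p.1 < p.2}),
                M (Sum.inl n) p = qt 0 (g - 1 - (n : ℕ)) (((p : Fin (g-1) × Fin (g-1)).1 : ℕ) + 1)
                  (((p : Fin (g-1) × Fin (g-1)).2 : ℕ) + 1)) →
              (∀ (n : Fin (g - 2)) (p : {p : Fin (g - 1) × Fin (g - 1) // p.1 < p.2}),
                M (Sum.inr n) p = qt 1 (g - 1 - ((n : ℕ) + 1))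
                  (((p : Fin (g-1) × Fin (g-1)).1 : ℕ) + 1)
                  (((p : Fin (g-1) × Fin (g-1)).2 : ℕ) + 1)) →
              M.rank = 2 * g - 2 ∧
              Module.finrank ℂ (LinearMap.ker M.mulVecLin) =
                (g - 1) * (g - 2) / 2 - (2 * g - 2) := by
  have hg2 : 2 ≤ g := by omega
  refine ⟨![fun i : ℕ => ((i : ℕ) : ℂ), fun i : ℕ => (((i : ℕ) : ℂ))⁻¹], 1, one_ne_zero,
    ?_, ?_, ?_⟩
  · intro k i hi
    simp only [Finset.mem_Icc] at hi
    have h0 : ((i : ℕ) : ℂ) ≠ 0 := Nat.cast_ne_zero.mpr (by omega)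
    fin_cases k
    · simpa using h0
    · simpa using inv_ne_zero h0
  · intro k
    fin_cases k
    · intro i _ j _ h
      have h' : ((i : ℕ) : ℂ) = ((j : ℕ) : ℂ) := h
      exact_mod_cast h'
    · intro i _ j _ h
      have h' : (((i : ℕ) : ℂ))⁻¹ = (((j : ℕ) : ℂ))⁻¹ := h
      have h'' := inv_injective h'
      exact_mod_cast h''
  intro δ c hδ hc0 hc1 q hq qt hqt0 hqt1 hqt2 M hM0 hM1
  set m : ℕ := g / 2 with hm
  have hm3 : 3 ≤ m := by omega
  have hmg : m + 2 ≤ g - 1 := by omega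
  -- basic value lemmas
  have haS : ∀ i : ℕ, i ≤ m → δ i = 1 := fun i h => by rw [hδ]; exact if_pos h
  have haL : ∀ i : ℕ, m < i → δ i = 0 := fun i h => by rw [hδ]; exact if_neg (by omega)
  have hcS : ∀ (k : Fin 2) (i : ℕ), i ≤ m → c k i = 0 := by
    intro k i h
    fin_cases k
    · show c 0 i = 0
      rw [hc0]; exact if_pos h
    · show c 1 i = 0
      rw [hc1]; exact if_pos h
  have hc0L : ∀ i : ℕ, m < i → c 0 i = -((i : ℕ) : ℂ) := by
    intro i h
    rw [hc0, if_neg (by omega)]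
    norm_num [Matrix.cons_val_zero]
  have hc1L : ∀ i : ℕ, m < i → c 1 i = (((i : ℕ) : ℂ))⁻¹ := by
    intro i h
    rw [hc1, if_neg (by omega)]
    norm_num [Matrix.cons_val_one, Matrix.head_cons]
  have hq0mul : ∀ (h i j : ℕ),
      q 0 h i j * (((i : ℕ) : ℂ) - ((j : ℕ) : ℂ)) = ((i : ℕ) : ℂ) ^ (h + 1) - ((j : ℕ) : ℂ) ^ (h + 1) := by
    intro h i j
    rw [hq]
    have hg2' := geom_sum₂_mul ((i : ℕ) : ℂ) ((j : ℕ) : ℂ) (h + 1)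
    simp only [Nat.add_sub_cancel] at hg2'
    simpa [Matrix.cons_val_zero] using hg2'
  have hq1mul : ∀ (h i j : ℕ),
      q 1 h i j * ((((i : ℕ) : ℂ))⁻¹ - (((j : ℕ) : ℂ))⁻¹)
        = (((i : ℕ) : ℂ))⁻¹ ^ (h + 1) - (((j : ℕ) : ℂ))⁻¹ ^ (h + 1) := by
    intro h i j
    rw [hq]
    have hg2' := geom_sum₂_mul ((((i : ℕ) : ℂ))⁻¹) ((((j : ℕ) : ℂ))⁻¹) (h + 1)
    simp only [Nat.add_sub_cancel] at hg2'
    simpa [Matrix.cons_val_one, Matrix.head_cons] using hg2'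
  -- the q̃ values for the three type of columns
  have hqtS : ∀ (k : Fin 2) (r i j : ℕ), i ≤ m → j ≤ m → qt k r i j = q k r i j := by
    intro k r i j hi hj
    match r with
    | 0 => rw [hqt0, haS i hi, haS j hj, hq]; simp
    | 1 => rw [hqt1, haS i hi, haS j hj, hcS k i hi, hcS k j hj]; ring
    | (n + 2) =>
      rw [hqt2 k (n + 2) i j (by omega), haS i hi, haS j hj, hcS k i hi, hcS k j hj]; ring
  have hqtB0 : ∀ (r i j : ℕ), i ≤ m → m < j →
      qt 0 r i j * (((i : ℕ) : ℂ) - ((j : ℕ) : ℂ))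
        = ((j : ℕ) : ℂ) * (((i : ℕ) : ℂ) ^ r - ((j : ℕ) : ℂ) ^ r) := by
    intro r i j hi hj
    match r with
    | 0 => rw [hqt0, haS i hi, haL j hj]; ring
    | 1 => rw [hqt1, haS i hi, haL j hj, hcS 0 i hi, hc0L j hj]; ring
    | (n + 2) =>
      rw [hqt2 0 (n + 2) i j (by omega), haS i hi, haL j hj, hcS 0 i hi, hc0L j hj,
        show n + 2 - 1 = n + 1 from rfl, show n + 2 - 2 = n from rfl]
      linear_combination ((j : ℕ) : ℂ) * hq0mul (n + 1) i j
  have hqtB1 : ∀ (r i j : ℕ), i ≤ m → m < j →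
      qt 1 r i j * ((((i : ℕ) : ℂ))⁻¹ - (((j : ℕ) : ℂ))⁻¹)
        = -(((j : ℕ) : ℂ))⁻¹ * ((((i : ℕ) : ℂ))⁻¹ ^ r - (((j : ℕ) : ℂ))⁻¹ ^ r) := by
    intro r i j hi hj
    match r with
    | 0 => rw [hqt0, haS i hi, haL j hj]; ring
    | 1 => rw [hqt1, haS i hi, haL j hj, hcS 1 i hi, hc1L j hj]; ring
    | (n + 2) =>
      rw [hqt2 1 (n + 2) i j (by omega), haS i hi, haL j hj, hcS 1 i hi, hc1L j hj,
        show n + 2 - 1 = n + 1 from rfl, show n + 2 - 2 = n from rfl]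
      linear_combination (-(((j : ℕ) : ℂ))⁻¹) * hq1mul (n + 1) i j
  have hqtC0 : ∀ (r i j : ℕ), m < i → m < j →
      qt 0 r i j * (((i : ℕ) : ℂ) - ((j : ℕ) : ℂ))
        = ((i : ℕ) : ℂ) * ((j : ℕ) : ℂ) * (((i : ℕ) : ℂ) ^ (r - 1) - ((j : ℕ) : ℂ) ^ (r - 1)) := by
    intro r i j hi hj
    match r with
    | 0 => rw [hqt0, haL i hi, haL j hj, show (0 : ℕ) - 1 = 0 from rfl]; ring
    | 1 => rw [hqt1, haL i hi, haL j hj, show (1 : ℕ) - 1 = 0 from rfl]; ring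
    | (n + 2) =>
      rw [hqt2 0 (n + 2) i j (by omega), haL i hi, haL j hj, hc0L i hi, hc0L j hj,
        show n + 2 - 1 = n + 1 from rfl, show n + 2 - 2 = n from rfl]
      linear_combination ((i : ℕ) : ℂ) * ((j : ℕ) : ℂ) * hq0mul n i j
  have hqtC1 : ∀ (r i j : ℕ), m < i → m < j →
      qt 1 r i j * ((((i : ℕ) : ℂ))⁻¹ - (((j : ℕ) : ℂ))⁻¹)
        = (((i : ℕ) : ℂ))⁻¹ * (((j : ℕ) : ℂ))⁻¹
          * ((((i : ℕ) : ℂ))⁻¹ ^ (r - 1) - (((j : ℕ) : ℂ))⁻¹ ^ (r - 1)) := by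
    intro r i j hi hj
    match r with
    | 0 => rw [hqt0, haL i hi, haL j hj, show (0 : ℕ) - 1 = 0 from rfl]; ring
    | 1 => rw [hqt1, haL i hi, haL j hj, show (1 : ℕ) - 1 = 0 from rfl]; ring
    | (n + 2) =>
      rw [hqt2 1 (n + 2) i j (by omega), haL i hi, haL j hj, hc1L i hi, hc1L j hj,
        show n + 2 - 1 = n + 1 from rfl, show n + 2 - 2 = n from rfl]
      linear_combination (((i : ℕ) : ℂ))⁻¹ * (((j : ℕ) : ℂ))⁻¹ * hq1mul n i j
  have hker : LinearMap.ker (Mᵀ.mulVecLin) = ⊥ := by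
    rw [LinearMap.ker_eq_bot']
    intro v hv
    have hcol : ∀ I J : ℕ, 1 ≤ I → I < J → J ≤ g - 1 →
        (∑ n : Fin g, qt 0 (g - 1 - (n : ℕ)) I J * v (Sum.inl n))
          + (∑ n : Fin (g - 2), qt 1 (g - 2 - (n : ℕ)) I J * v (Sum.inr n)) = 0 := by
      intro I J hI hIJ hJ
      have hp1 : I - 1 < g - 1 := by omega
      have hp2 : J - 1 < g - 1 := by omega
      have hplt : (⟨I - 1, hp1⟩ : Fin (g - 1)) < (⟨J - 1, hp2⟩ : Fin (g - 1)) := by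
        rw [Fin.mk_lt_mk]; omega
      have h0 : Mᵀ.mulVecLin v ⟨(⟨I - 1, hp1⟩, ⟨J - 1, hp2⟩), hplt⟩ = 0 := by
        rw [hv]; rfl
      rw [Matrix.mulVecLin_apply] at h0
      have h1 : (Mᵀ *ᵥ v) ⟨(⟨I - 1, hp1⟩, ⟨J - 1, hp2⟩), hplt⟩
          = ∑ r : Fin g ⊕ Fin (g - 2), M r ⟨(⟨I - 1, hp1⟩, ⟨J - 1, hp2⟩), hplt⟩ * v r := by
        simp [Matrix.mulVec, dotProduct, Matrix.transpose_apply]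
      rw [h1, Fintype.sum_sum_type] at h0
      simp only [hM0, hM1] at h0
      have e1 : I - 1 + 1 = I := by omega
      have e2 : J - 1 + 1 = J := by omega
      have e3 : ∀ n : ℕ, g - 1 - (n + 1) = g - 2 - n := by intro n; omega
      simp only [e1, e2, e3] at h0
      exact h0
    have hFA : ∀ I J : ℕ, 1 ≤ I → I < J → J ≤ m →
        ((I : ℕ) : ℂ) * (phiF g v I + psiF g v J)
          = ((J : ℕ) : ℂ) * (phiF g v J + psiF g v I) := by
      intro I J hI1 hIJ hJm
      have hJg : J ≤ g - 1 := by omega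
      have hE := hcol I J hI1 hIJ hJg
      have hxI : ((I : ℕ) : ℂ) ≠ 0 := Nat.cast_ne_zero.mpr (by omega)
      have hxJ : ((J : ℕ) : ℂ) ≠ 0 := Nat.cast_ne_zero.mpr (by omega)
      have hxne : ((I : ℕ) : ℂ) ≠ ((J : ℕ) : ℂ) := by
        have h' : I ≠ J := by omega
        exact_mod_cast h'
      have hinvI : ((I : ℕ) : ℂ) * (((I : ℕ) : ℂ))⁻¹ = 1 := mul_inv_cancel₀ hxI
      have hinvJ : ((J : ℕ) : ℂ) * (((J : ℕ) : ℂ))⁻¹ = 1 := mul_inv_cancel₀ hxJ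
      have hS0 : (∑ n : Fin g, qt 0 (g - 1 - (n : ℕ)) I J * v (Sum.inl n))
            * (((I : ℕ) : ℂ) - ((J : ℕ) : ℂ))
          = ((I : ℕ) : ℂ) * phiF g v I - ((J : ℕ) : ℂ) * phiF g v J := by
        have hF0 : ∀ r, qt 0 r I J * (((I : ℕ) : ℂ) - ((J : ℕ) : ℂ))
            = ((I : ℕ) : ℂ) ^ (r + 1) - ((J : ℕ) : ℂ) ^ (r + 1) := fun r => by
          rw [hqtS 0 r I J (by omega) (by omega)]; exact hq0mul r I J
        have := sumA (fun n : Fin g => v (Sum.inl n)) (fun r => qt 0 r I J)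
          (fun n : Fin g => g - 1 - (n : ℕ)) ((I : ℕ) : ℂ) ((J : ℕ) : ℂ) hF0
        simpa [phiF] using this
      have hS1 : (∑ n : Fin (g - 2), qt 1 (g - 2 - (n : ℕ)) I J * v (Sum.inr n))
            * ((((I : ℕ) : ℂ))⁻¹ - (((J : ℕ) : ℂ))⁻¹)
          = (((I : ℕ) : ℂ))⁻¹ * psiF g v I - (((J : ℕ) : ℂ))⁻¹ * psiF g v J := by
        have hF1 : ∀ r, qt 1 r I J * ((((I : ℕ) : ℂ))⁻¹ - (((J : ℕ) : ℂ))⁻¹)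
            = (((I : ℕ) : ℂ))⁻¹ ^ (r + 1) - (((J : ℕ) : ℂ))⁻¹ ^ (r + 1) := fun r => by
          rw [hqtS 1 r I J (by omega) (by omega)]; exact hq1mul r I J
        have := sumA (fun n : Fin (g - 2) => v (Sum.inr n)) (fun r => qt 1 r I J)
          (fun n : Fin (g - 2) => g - 2 - (n : ℕ)) ((((I : ℕ) : ℂ))⁻¹) ((((J : ℕ) : ℂ))⁻¹) hF1
        simpa [psiF] using this
      have hE2 : ((((I : ℕ) : ℂ))⁻¹ - (((J : ℕ) : ℂ))⁻¹)
            * (((I : ℕ) : ℂ) * phiF g v I - ((J : ℕ) : ℂ) * phiF g v J)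
          + (((I : ℕ) : ℂ) - ((J : ℕ) : ℂ))
            * ((((I : ℕ) : ℂ))⁻¹ * psiF g v I - (((J : ℕ) : ℂ))⁻¹ * psiF g v J) = 0 := by
        linear_combination (-((((I : ℕ) : ℂ))⁻¹ - (((J : ℕ) : ℂ))⁻¹)) * hS0
          - (((I : ℕ) : ℂ) - ((J : ℕ) : ℂ)) * hS1
          + (((I : ℕ) : ℂ) - ((J : ℕ) : ℂ)) * ((((I : ℕ) : ℂ))⁻¹ - (((J : ℕ) : ℂ))⁻¹) * hE
      have hkey : (((J : ℕ) : ℂ) - ((I : ℕ) : ℂ))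
            * (((I : ℕ) : ℂ) * (phiF g v I + psiF g v J))
          = (((J : ℕ) : ℂ) - ((I : ℕ) : ℂ))
            * (((J : ℕ) : ℂ) * (phiF g v J + psiF g v I)) := by
        linear_combination ((I : ℕ) : ℂ) * ((J : ℕ) : ℂ) * hE2
          - (((J : ℕ) : ℂ) * (((I : ℕ) : ℂ) * phiF g v I - ((J : ℕ) : ℂ) * phiF g v J)
             + ((J : ℕ) : ℂ) * (((I : ℕ) : ℂ) - ((J : ℕ) : ℂ)) * psiF g v I) * hinvI
          - (-(((I : ℕ) : ℂ)) * (((I : ℕ) : ℂ) * phiF g v I - ((J : ℕ) : ℂ) * phiF g v J)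
             - ((I : ℕ) : ℂ) * (((I : ℕ) : ℂ) - ((J : ℕ) : ℂ)) * psiF g v J) * hinvJ
      exact mul_left_cancel₀ (sub_ne_zero_of_ne (Ne.symm hxne)) hkey
    have hFB : ∀ I J : ℕ, 1 ≤ I → I ≤ m → m < J → J ≤ g - 1 →
        ((J : ℕ) : ℂ) * (phiF g v I - phiF g v J)
          + ((I : ℕ) : ℂ) * (psiF g v I - psiF g v J) = 0 := by
      intro I J hI1 hIm hmJ hJg
      have hIJ : I < J := by omega
      have hE := hcol I J hI1 hIJ hJg
      have hxI : ((I : ℕ) : ℂ) ≠ 0 := Nat.cast_ne_zero.mpr (by omega)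
      have hxJ : ((J : ℕ) : ℂ) ≠ 0 := Nat.cast_ne_zero.mpr (by omega)
      have hxne : ((I : ℕ) : ℂ) ≠ ((J : ℕ) : ℂ) := by
        have h' : I ≠ J := by omega
        exact_mod_cast h'
      have hinvI : ((I : ℕ) : ℂ) * (((I : ℕ) : ℂ))⁻¹ = 1 := mul_inv_cancel₀ hxI
      have hinvJ : ((J : ℕ) : ℂ) * (((J : ℕ) : ℂ))⁻¹ = 1 := mul_inv_cancel₀ hxJ
      have hS0 : (∑ n : Fin g, qt 0 (g - 1 - (n : ℕ)) I J * v (Sum.inl n))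
            * (((I : ℕ) : ℂ) - ((J : ℕ) : ℂ))
          = ((J : ℕ) : ℂ) * (phiF g v I - phiF g v J) := by
        have := sumB (fun n : Fin g => v (Sum.inl n)) (fun r => qt 0 r I J)
          (fun n : Fin g => g - 1 - (n : ℕ)) ((I : ℕ) : ℂ) ((J : ℕ) : ℂ) ((J : ℕ) : ℂ)
          (fun r => hqtB0 r I J hIm hmJ)
        simpa [phiF] using this
      have hS1 : (∑ n : Fin (g - 2), qt 1 (g - 2 - (n : ℕ)) I J * v (Sum.inr n))
            * ((((I : ℕ) : ℂ))⁻¹ - (((J : ℕ) : ℂ))⁻¹)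
          = (-(((J : ℕ) : ℂ))⁻¹) * (psiF g v I - psiF g v J) := by
        have := sumB (fun n : Fin (g - 2) => v (Sum.inr n)) (fun r => qt 1 r I J)
          (fun n : Fin (g - 2) => g - 2 - (n : ℕ)) ((((I : ℕ) : ℂ))⁻¹) ((((J : ℕ) : ℂ))⁻¹)
          (-(((J : ℕ) : ℂ))⁻¹) (fun r => hqtB1 r I J hIm hmJ)
        simpa [psiF] using this
      have hE2 : ((((I : ℕ) : ℂ))⁻¹ - (((J : ℕ) : ℂ))⁻¹)
            * (((J : ℕ) : ℂ) * (phiF g v I - phiF g v J))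
          + (((I : ℕ) : ℂ) - ((J : ℕ) : ℂ))
            * ((-(((J : ℕ) : ℂ))⁻¹) * (psiF g v I - psiF g v J)) = 0 := by
        linear_combination (-((((I : ℕ) : ℂ))⁻¹ - (((J : ℕ) : ℂ))⁻¹)) * hS0
          - (((I : ℕ) : ℂ) - ((J : ℕ) : ℂ)) * hS1
          + (((I : ℕ) : ℂ) - ((J : ℕ) : ℂ)) * ((((I : ℕ) : ℂ))⁻¹ - (((J : ℕ) : ℂ))⁻¹) * hE
      have hkey : (((J : ℕ) : ℂ) - ((I : ℕ) : ℂ))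
            * (((J : ℕ) : ℂ) * (phiF g v I - phiF g v J)
              + ((I : ℕ) : ℂ) * (psiF g v I - psiF g v J))
          = (((J : ℕ) : ℂ) - ((I : ℕ) : ℂ)) * 0 := by
        linear_combination ((I : ℕ) : ℂ) * ((J : ℕ) : ℂ) * hE2
          - ((J : ℕ) : ℂ) ^ 2 * (phiF g v I - phiF g v J) * hinvI
          + (((I : ℕ) : ℂ) * ((J : ℕ) : ℂ) * (phiF g v I - phiF g v J)
             + ((I : ℕ) : ℂ) * (((I : ℕ) : ℂ) - ((J : ℕ) : ℂ))
               * (psiF g v I - psiF g v J)) * hinvJ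
      exact mul_left_cancel₀ (sub_ne_zero_of_ne (Ne.symm hxne)) hkey
    have hFC : ∀ I J : ℕ, m < I → I < J → J ≤ g - 1 →
        ((J : ℕ) : ℂ) * phiF g v I - ((I : ℕ) : ℂ) * phiF g v J
          + (v (Sum.inl ⟨g - 1, by omega⟩)) * (((I : ℕ) : ℂ) - ((J : ℕ) : ℂ))
          - ((I : ℕ) : ℂ) * psiF g v I + ((J : ℕ) : ℂ) * psiF g v J = 0 := by
      intro I J hmI hIJ hJg
      have hI1 : 1 ≤ I := by omega
      have hE := hcol I J hI1 hIJ hJg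
      have hxI : ((I : ℕ) : ℂ) ≠ 0 := Nat.cast_ne_zero.mpr (by omega)
      have hxJ : ((J : ℕ) : ℂ) ≠ 0 := Nat.cast_ne_zero.mpr (by omega)
      have hxne : ((I : ℕ) : ℂ) ≠ ((J : ℕ) : ℂ) := by
        have h' : I ≠ J := by omega
        exact_mod_cast h'
      have hinvI : ((I : ℕ) : ℂ) * (((I : ℕ) : ℂ))⁻¹ = 1 := mul_inv_cancel₀ hxI
      have hinvJ : ((J : ℕ) : ℂ) * (((J : ℕ) : ℂ))⁻¹ = 1 := mul_inv_cancel₀ hxJ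
      have hS0 : (∑ n : Fin g, qt 0 (g - 1 - (n : ℕ)) I J * v (Sum.inl n))
            * (((I : ℕ) : ℂ) - ((J : ℕ) : ℂ))
          = ((J : ℕ) : ℂ) * (phiF g v I - v (Sum.inl ⟨g - 1, by omega⟩))
            - ((I : ℕ) : ℂ) * (phiF g v J - v (Sum.inl ⟨g - 1, by omega⟩)) := by
        have := sumCfull (K := g) (by omega) (fun n : Fin g => v (Sum.inl n))
          (fun r => qt 0 r I J) ((I : ℕ) : ℂ) ((J : ℕ) : ℂ)
          (fun r => hqtC0 r I J hmI (by omega))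
        simpa [phiF] using this
      have hS1 : (∑ n : Fin (g - 2), qt 1 (g - 2 - (n : ℕ)) I J * v (Sum.inr n))
            * ((((I : ℕ) : ℂ))⁻¹ - (((J : ℕ) : ℂ))⁻¹)
          = (((J : ℕ) : ℂ))⁻¹ * psiF g v I - (((I : ℕ) : ℂ))⁻¹ * psiF g v J := by
        have := sumCshift (K := g - 2) (fun n : Fin (g - 2) => v (Sum.inr n))
          (fun r => qt 1 r I J) ((((I : ℕ) : ℂ))⁻¹) ((((J : ℕ) : ℂ))⁻¹)
          (fun r => hqtC1 r I J hmI (by omega))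
        simpa [psiF] using this
      have hE2 : ((((I : ℕ) : ℂ))⁻¹ - (((J : ℕ) : ℂ))⁻¹)
            * (((J : ℕ) : ℂ) * (phiF g v I - v (Sum.inl ⟨g - 1, by omega⟩))
              - ((I : ℕ) : ℂ) * (phiF g v J - v (Sum.inl ⟨g - 1, by omega⟩)))
          + (((I : ℕ) : ℂ) - ((J : ℕ) : ℂ))
            * ((((J : ℕ) : ℂ))⁻¹ * psiF g v I - (((I : ℕ) : ℂ))⁻¹ * psiF g v J) = 0 := by
        linear_combination (-((((I : ℕ) : ℂ))⁻¹ - (((J : ℕ) : ℂ))⁻¹)) * hS0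
          - (((I : ℕ) : ℂ) - ((J : ℕ) : ℂ)) * hS1
          + (((I : ℕ) : ℂ) - ((J : ℕ) : ℂ)) * ((((I : ℕ) : ℂ))⁻¹ - (((J : ℕ) : ℂ))⁻¹) * hE
      have hkey : (((J : ℕ) : ℂ) - ((I : ℕ) : ℂ))
            * (((J : ℕ) : ℂ) * phiF g v I - ((I : ℕ) : ℂ) * phiF g v J
              + (v (Sum.inl ⟨g - 1, by omega⟩)) * (((I : ℕ) : ℂ) - ((J : ℕ) : ℂ))
              - ((I : ℕ) : ℂ) * psiF g v I + ((J : ℕ) : ℂ) * psiF g v J)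
          = (((J : ℕ) : ℂ) - ((I : ℕ) : ℂ)) * 0 := by
        linear_combination ((I : ℕ) : ℂ) * ((J : ℕ) : ℂ) * hE2
          - (((J : ℕ) : ℂ) * (((J : ℕ) : ℂ) * (phiF g v I - v (Sum.inl ⟨g - 1, by omega⟩))
              - ((I : ℕ) : ℂ) * (phiF g v J - v (Sum.inl ⟨g - 1, by omega⟩)))
             - ((J : ℕ) : ℂ) * (((I : ℕ) : ℂ) - ((J : ℕ) : ℂ)) * psiF g v J) * hinvI
          - (-(((I : ℕ) : ℂ)) * (((J : ℕ) : ℂ) * (phiF g v I - v (Sum.inl ⟨g - 1, by omega⟩))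
              - ((I : ℕ) : ℂ) * (phiF g v J - v (Sum.inl ⟨g - 1, by omega⟩)))
             + ((I : ℕ) : ℂ) * (((I : ℕ) : ℂ) - ((J : ℕ) : ℂ)) * psiF g v I) * hinvJ
      exact mul_left_cancel₀ (sub_ne_zero_of_ne (Ne.symm hxne)) hkey
    obtain ⟨ρ, hρφ, hρψ, hlam⟩ := middle g m hm3 hmg (phiF g v) (psiF g v)
      (v (Sum.inl ⟨g - 1, by omega⟩)) hFA hFB hFC
    obtain ⟨hw, hu⟩ := endgame g hg (fun n => v (Sum.inl n)) (fun n => v (Sum.inr n)) ρ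
      (fun i h1 h2 => by simpa [phiF] using hρφ i h1 h2)
      (fun i h1 h2 => by simpa [psiF] using hρψ i h1 h2)
      hlam
    funext r
    rcases r with n | n
    · exact hw n
    · exact hu n
  have hrank : M.rank = 2 * g - 2 := by
    have h1 : Mᵀ.rank = M.rank := Matrix.rank_transpose M
    rw [← h1]
    have h2 : Mᵀ.rank = Module.finrank ℂ (LinearMap.range (Mᵀ.mulVecLin)) := rfl
    rw [h2, LinearMap.finrank_range_of_inj (LinearMap.ker_eq_bot.mp hker),
      Module.finrank_fintype_fun_eq_card, Fintype.card_sum, Fintype.card_fin, Fintype.card_fin]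
    omega
  refine ⟨hrank, ?_⟩
  have hrn := LinearMap.finrank_range_add_finrank_ker (M.mulVecLin)
  have hcards : Module.finrank ℂ ({p : Fin (g - 1) × Fin (g - 1) // p.1 < p.2} → ℂ)
      = (g - 1) * (g - 2) / 2 := by
    rw [Module.finrank_fintype_fun_eq_card, cardPairs]
    have e : g - 1 - 1 = g - 2 := by omega
    rw [e]
  rw [hcards] at hrn
  have hrange : Module.finrank ℂ (LinearMap.range M.mulVecLin) = 2 * g - 2 := hrank
  omega
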